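/- Let F5 = {K_3, S_3}. Then c_k(F5) = g_k(F5) = 2k + 1 for every integer k ≥ 2, while c_1(F5) = 2 and g_1(F5) ≥ 3. In particular, F5 is k-nice for every k ≥ 2 but not for k = 1. -/

import Mathlib

open SimpleGraph

/-- A monochromatic copy of `H` in `G` under the edge `k`-coloring `col`:
an injective map sending edges of `H` to edges of `G`, all of the same color. -/
def HasMonoCopy {V : Type*} {W : Type*} {k : ℕ} (G : SimpleGraph V)
    (col : Sym2 V → Fin k) (H : SimpleGraph W) : Prop :=
  ∃ (i : Fin k) (f : W ↪ V), ∀ a b : W, H.Adj a b →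
    G.Adj (f a) (f b) ∧ col s(f a, f b) = i

/-- A family of graphs. -/
abbrev GraphFam : Type 1 := Set ((W : Type) × SimpleGraph W)

/-- The coloring `col` of (the edges of) `G` contains no monochromatic copy of
any member of the family `F`. -/
def AvoidsFam {V : Type} {k : ℕ} (G : SimpleGraph V)
    (col : Sym2 V → Fin k) (F : GraphFam) : Prop :=
  ∀ H ∈ F, ¬ HasMonoCopy G col H.2

/-- The set of integers `s` such that the complete graph `K_s` admits a
`k`-coloring of its edges with no monochromatic copy of any member of `F`.
`c_k(F)` is the greatest element of this set. -/
def cSet (k : ℕ) (F : GraphFam) : Set ℕ :=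
  {s | ∃ col : Sym2 (Fin s) → Fin k,
    AvoidsFam (⊤ : SimpleGraph (Fin s)) col F}

/-- The set of integers `s` such that some finite graph `G` with chromatic number `s`
admits a `k`-coloring of its edges with no monochromatic copy of any member of `F`.
`g_k(F)` is the greatest element of this set. -/
def gSet (k : ℕ) (F : GraphFam) : Set ℕ :=
  {s | ∃ (V : Type) (_ : Fintype V) (G : SimpleGraph V)
    (col : Sym2 V → Fin k), G.chromaticNumber = (s : ℕ∞) ∧ AvoidsFam G col F}

/-- The family `F₅ = {K₃, S₃}`, where `S₃ = K_{1,3}`. -/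
def F5 : GraphFam :=
  {⟨Fin 3, (⊤ : SimpleGraph (Fin 3))⟩,
   ⟨Fin 1 ⊕ Fin 3, completeBipartiteGraph (Fin 1) (Fin 3)⟩}

/-! helper lemmas -/
section helper
open Finset

lemma L1 {k v u w : ℕ} (hu : u < 2*k) (hw : w < 2*k)
    (h : (v+u) % (2*k) = (v+w) % (2*k)) : u = w := by
  have h2 : u % (2*k) = w % (2*k) := Nat.ModEq.add_left_cancel' v h
  rwa [Nat.mod_eq_of_lt hu, Nat.mod_eq_of_lt hw] at h2

lemma L2 {k a i : ℕ} (hk : 0 < k) (ha : a < 2*k) (h : a % k = i) :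
    a = i ∨ a = i + k := by
  have hd := Nat.div_add_mod a k
  have hq : a / k < 2 := (Nat.div_lt_iff_lt_mul hk).mpr (by omega)
  have : a / k = 0 ∨ a / k = 1 := (Nat.lt_succ_iff_lt_or_eq.mp hq).imp Nat.lt_one_iff.mp id
  rcases this with h0 | h0 <;> rw [h0] at hd <;> omega

def gcol (k a b : ℕ) : ℕ :=
  if a = 2*k then b % k else if b = 2*k then a % k else ((a+b) % (2*k)) / 2

lemma gcol_lt {k : ℕ} (hk : 0 < k) (a b : ℕ) : gcol k a b < k := by
  unfold gcol
  split_ifs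
  · exact Nat.mod_lt _ hk
  · exact Nat.mod_lt _ hk
  · have : (a+b) % (2*k) < 2*k := Nat.mod_lt _ (by omega)
    omega

lemma gcol_comm (k a b : ℕ) : gcol k a b = gcol k b a := by
  unfold gcol
  split_ifs with h1 h2 h3 <;> simp_all [Nat.add_comm]

lemma gcol_lt_lt {k a b : ℕ} (ha : a < 2*k) (hb : b < 2*k) :
    gcol k a b = ((a+b) % (2*k)) / 2 := by
  unfold gcol; rw [if_neg (by omega), if_neg (by omega)]

lemma gcol_right {k a : ℕ} (hk : 0 < k) (ha : a < 2*k) : gcol k a (2*k) = a % k := by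
  unfold gcol; rw [if_neg (by omega), if_pos rfl]

lemma gcol_left {k b : ℕ} : gcol k (2*k) b = b % k := by
  unfold gcol; rw [if_pos rfl]

lemma div2_eq {s i : ℕ} (h : s / 2 = i) : s = 2*i ∨ s = 2*i+1 := by omega

lemma core1 {k a b c i : ℕ} (ha : a < 2*k) (hb : b < 2*k) (hc : c < 2*k)
    (hab : a ≠ b) (hac : a ≠ c) (hbc : b ≠ c)
    (h1 : gcol k a b = i) (h2 : gcol k a c = i) (h3 : gcol k b c = i) : False := by
  rw [gcol_lt_lt ha hb] at h1
  rw [gcol_lt_lt ha hc] at h2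
  rw [gcol_lt_lt hb hc] at h3
  have e1 : ¬ ((a+b) % (2*k) = (a+c) % (2*k)) := fun h => hbc (L1 hb hc h)
  have e2 : ¬ ((a+b) % (2*k) = (b+c) % (2*k)) := by
    rw [Nat.add_comm a b]; exact fun h => hac (L1 ha hc h)
  have e3 : ¬ ((a+c) % (2*k) = (b+c) % (2*k)) := by
    rw [Nat.add_comm a c, Nat.add_comm b c]; exact fun h => hab (L1 ha hb h)
  rcases div2_eq h1 with h1 | h1 <;> rcases div2_eq h2 with h2 | h2 <;>
    rcases div2_eq h3 with h3 | h3 <;>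
    first
      | exact e1 (h1.trans h2.symm)
      | exact e2 (h1.trans h3.symm)
      | exact e3 (h2.trans h3.symm)

lemma core2 {k a b i : ℕ} (hk : 2 ≤ k) (ha : a < 2*k) (hb : b < 2*k) (hab : a ≠ b)
    (h1 : a % k = i) (h2 : b % k = i) (h3 : gcol k a b = i) : False := by
  rw [gcol_lt_lt ha hb] at h3
  have ha' := L2 (by omega) ha h1
  have hb' := L2 (by omega) hb h2
  have hi : i < k := by omega
  have hsum : a + b = 2*i + k := by omega
  rw [hsum] at h3
  rcases lt_or_ge (2*i+k) (2*k) with h | h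
  · rw [Nat.mod_eq_of_lt h] at h3; omega
  · rw [Nat.mod_eq_sub_mod h, Nat.mod_eq_of_lt (by omega)] at h3; omega

-- no S3, center = 2k
lemma core0 {k x y z i : ℕ} (hk : 2 ≤ k) (hx : x < 2*k) (hy : y < 2*k) (hz : z < 2*k)
    (hxy : x ≠ y) (hxz : x ≠ z) (hyz : y ≠ z)
    (h1 : x % k = i) (h2 : y % k = i) (h3 : z % k = i) : False := by
  have := L2 (k := k) (by omega) hx h1
  have := L2 (k := k) (by omega) hy h2
  have := L2 (k := k) (by omega) hz h3
  omega

-- no S3, center v < 2k, one leaf = 2k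
lemma core3 {k v x y i : ℕ} (hk : 2 ≤ k) (hv : v < 2*k) (hx : x < 2*k) (hy : y < 2*k)
    (hxy : x ≠ y) (hvx : v ≠ x) (hvy : v ≠ y) (hi : i < k)
    (h1 : gcol k v x = i) (h2 : gcol k v y = i) (h3 : v % k = i) : False := by
  rw [gcol_lt_lt hv hx] at h1
  rw [gcol_lt_lt hv hy] at h2
  have hv' := L2 (k := k) (by omega) hv h3
  have h2v : (v+v) % (2*k) = 2*i := by
    rcases hv' with h | h
    · rw [h, Nat.mod_eq_of_lt (by omega)]; omega
    · rw [h]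
      have : (i+k) + (i+k) = 2*i + 2*k := by ring
      rw [this, Nat.add_mod_right, Nat.mod_eq_of_lt (by omega)]
  have ex : ¬ ((v+x) % (2*k) = 2*i) := fun h => hvx (L1 hv hx (h2v.trans h.symm))
  have ey : ¬ ((v+y) % (2*k) = 2*i) := fun h => hvy (L1 hv hy (h2v.trans h.symm))
  have exy : ¬ ((v+x) % (2*k) = (v+y) % (2*k)) := fun h => hxy (L1 hx hy h)
  rcases div2_eq h1 with h1 | h1 <;> rcases div2_eq h2 with h2 | h2 <;>
    first
      | exact ex h1
      | exact ey h2
      | exact exy (h1.trans h2.symm)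

lemma core4 {k v x y z i : ℕ} (hv : v < 2*k) (hx : x < 2*k) (hy : y < 2*k) (hz : z < 2*k)
    (hxy : x ≠ y) (hxz : x ≠ z) (hyz : y ≠ z)
    (h1 : gcol k v x = i) (h2 : gcol k v y = i) (h3 : gcol k v z = i) : False := by
  rw [gcol_lt_lt hv hx] at h1
  rw [gcol_lt_lt hv hy] at h2
  rw [gcol_lt_lt hv hz] at h3
  have e1 : ¬ ((v+x) % (2*k) = (v+y) % (2*k)) := fun h => hxy (L1 hx hy h)
  have e2 : ¬ ((v+x) % (2*k) = (v+z) % (2*k)) := fun h => hxz (L1 hx hz h)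
  have e3 : ¬ ((v+y) % (2*k) = (v+z) % (2*k)) := fun h => hyz (L1 hy hz h)
  rcases div2_eq h1 with h1 | h1 <;> rcases div2_eq h2 with h2 | h2 <;>
    rcases div2_eq h3 with h3 | h3 <;>
    first
      | exact e1 (h1.trans h2.symm)
      | exact e2 (h1.trans h3.symm)
      | exact e3 (h2.trans h3.symm)

lemma noK3nat {k a b c i : ℕ} (hk : 2 ≤ k)
    (ha : a < 2*k+1) (hb : b < 2*k+1) (hc : c < 2*k+1)
    (hab : a ≠ b) (hac : a ≠ c) (hbc : b ≠ c)
    (h1 : gcol k a b = i) (h2 : gcol k a c = i) (h3 : gcol k b c = i) : False := by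
  by_cases hA : a = 2*k
  · subst hA
    rw [gcol_left] at h1 h2
    exact core2 hk (by omega) (by omega) hbc h1 h2 h3
  · by_cases hB : b = 2*k
    · subst hB
      rw [gcol_right (by omega) (by omega)] at h1
      rw [gcol_left] at h3
      exact core2 hk (by omega) (by omega) hac h1 h3 h2
    · by_cases hC : c = 2*k
      · subst hC
        rw [gcol_right (by omega) (by omega)] at h2
        rw [gcol_right (by omega) (by omega)] at h3
        exact core2 hk (by omega) (by omega) hab h2 h3 h1
      · exact core1 (by omega) (by omega) (by omega) hab hac hbc h1 h2 h3

lemma noS3nat {k v x y z i : ℕ} (hk : 2 ≤ k) (hi : i < k)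
    (hv : v < 2*k+1) (hx : x < 2*k+1) (hy : y < 2*k+1) (hz : z < 2*k+1)
    (hxy : x ≠ y) (hxz : x ≠ z) (hyz : y ≠ z)
    (hvx : v ≠ x) (hvy : v ≠ y) (hvz : v ≠ z)
    (h1 : gcol k v x = i) (h2 : gcol k v y = i) (h3 : gcol k v z = i) : False := by
  by_cases hV : v = 2*k
  · subst hV
    rw [gcol_left] at h1 h2 h3
    exact core0 hk (by omega) (by omega) (by omega) hxy hxz hyz h1 h2 h3
  · by_cases hX : x = 2*k
    · subst hX
      rw [gcol_right (by omega) (by omega)] at h1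
      exact core3 hk (by omega) (by omega) (by omega) hyz hvy hvz hi h2 h3 h1
    · by_cases hY : y = 2*k
      · subst hY
        rw [gcol_right (by omega) (by omega)] at h2
        exact core3 hk (by omega) (by omega) (by omega) hxz hvx hvz hi h1 h3 h2
      · by_cases hZ : z = 2*k
        · subst hZ
          rw [gcol_right (by omega) (by omega)] at h3
          exact core3 hk (by omega) (by omega) (by omega) hxy hvx hvy hi h1 h2 h3
        · exact core4 (by omega) (by omega) (by omega) (by omega) hxy hxz hyz h1 h2 h3

def fcol (k : ℕ) (hk : 0 < k) : Sym2 (Fin (2*k+1)) → Fin k :=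
  Sym2.lift ⟨fun a b => ⟨gcol k a.val b.val, gcol_lt hk a.val b.val⟩,
    fun a b => Fin.ext (gcol_comm k a.val b.val)⟩

lemma fcol_eq {k : ℕ} (hk : 0 < k) (a b : Fin (2*k+1)) {i : Fin k}
    (h : fcol k hk s(a,b) = i) : gcol k a.val b.val = i.val := by
  have := congrArg Fin.val h
  simpa [fcol] using this

lemma noMonoK3 {k : ℕ} (hk : 2 ≤ k) :
    ¬ HasMonoCopy (⊤ : SimpleGraph (Fin (2*k+1))) (fcol k (by omega))
      (⊤ : SimpleGraph (Fin 3)) := by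
  rintro ⟨i, f, hf⟩
  have d01 : (f 0).val ≠ (f 1).val := fun h => absurd (f.injective (Fin.val_injective h)) (by decide)
  have d02 : (f 0).val ≠ (f 2).val := fun h => absurd (f.injective (Fin.val_injective h)) (by decide)
  have d12 : (f 1).val ≠ (f 2).val := fun h => absurd (f.injective (Fin.val_injective h)) (by decide)
  have h01 := fcol_eq _ _ _ (hf 0 1 (by simp)).2
  have h02 := fcol_eq _ _ _ (hf 0 2 (by simp)).2
  have h12 := fcol_eq _ _ _ (hf 1 2 (by simp)).2
  exact noK3nat hk (f 0).isLt (f 1).isLt (f 2).isLt d01 d02 d12 h01 h02 h12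

lemma noMonoS3 {k : ℕ} (hk : 2 ≤ k) :
    ¬ HasMonoCopy (⊤ : SimpleGraph (Fin (2*k+1))) (fcol k (by omega))
      (completeBipartiteGraph (Fin 1) (Fin 3)) := by
  rintro ⟨i, f, hf⟩
  have dxy : (f (.inr 0)).val ≠ (f (.inr 1)).val :=
    fun h => absurd (f.injective (Fin.val_injective h)) (by decide)
  have dxz : (f (.inr 0)).val ≠ (f (.inr 2)).val :=
    fun h => absurd (f.injective (Fin.val_injective h)) (by decide)
  have dyz : (f (.inr 1)).val ≠ (f (.inr 2)).val :=
    fun h => absurd (f.injective (Fin.val_injective h)) (by decide)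
  have dvx : (f (.inl 0)).val ≠ (f (.inr 0)).val :=
    fun h => absurd (f.injective (Fin.val_injective h)) (by decide)
  have dvy : (f (.inl 0)).val ≠ (f (.inr 1)).val :=
    fun h => absurd (f.injective (Fin.val_injective h)) (by decide)
  have dvz : (f (.inl 0)).val ≠ (f (.inr 2)).val :=
    fun h => absurd (f.injective (Fin.val_injective h)) (by decide)
  have h1 := fcol_eq _ _ _ (hf (.inl 0) (.inr 0) (by simp)).2
  have h2 := fcol_eq _ _ _ (hf (.inl 0) (.inr 1) (by simp)).2
  have h3 := fcol_eq _ _ _ (hf (.inl 0) (.inr 2) (by simp)).2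
  exact noS3nat hk i.isLt (f (.inl 0)).isLt (f (.inr 0)).isLt (f (.inr 1)).isLt
    (f (.inr 2)).isLt dxy dxz dyz dvx dvy dvz h1 h2 h3

lemma avoidF5 {k : ℕ} (hk : 2 ≤ k) :
    AvoidsFam (⊤ : SimpleGraph (Fin (2*k+1))) (fcol k (by omega)) F5 := by
  intro H hH
  simp only [F5, Set.mem_insert_iff, Set.mem_singleton_iff] at hH
  rcases hH with rfl | rfl
  · exact noMonoK3 hk
  · exact noMonoS3 hk

lemma exists_three {α : Type*} {t : Finset α} (h : 2 < t.card) :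
    ∃ x ∈ t, ∃ y ∈ t, ∃ z ∈ t, x ≠ y ∧ x ≠ z ∧ y ≠ z := by
  classical
  obtain ⟨x, hx⟩ : t.Nonempty := Finset.card_pos.mp (by omega)
  have h2 : 1 < (t.erase x).card := by
    rw [Finset.card_erase_of_mem hx]; omega
  obtain ⟨y, hy, z, hz, hyz⟩ := Finset.one_lt_card.mp h2
  exact ⟨x, hx, y, Finset.mem_of_mem_erase hy, z, Finset.mem_of_mem_erase hz,
    (Finset.ne_of_mem_erase hy).symm, (Finset.ne_of_mem_erase hz).symm, hyz⟩

lemma hasMonoS3 {V : Type} {k : ℕ} (G : SimpleGraph V) (col : Sym2 V → Fin k)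
    {i : Fin k} {v x y z : V} (hxy : x ≠ y) (hxz : x ≠ z) (hyz : y ≠ z)
    (ax : G.Adj v x) (ay : G.Adj v y) (az : G.Adj v z)
    (cx : col s(v,x) = i) (cy : col s(v,y) = i) (cz : col s(v,z) = i) :
    HasMonoCopy G col (completeBipartiteGraph (Fin 1) (Fin 3)) := by
  refine ⟨i, ⟨Sum.elim (fun _ => v) ![x,y,z], ?_⟩, ?_⟩
  · rintro (p | p) (q | q) h
    · simp [Subsingleton.elim p q]
    · simp only [Sum.elim_inl, Sum.elim_inr] at h
      exfalso; fin_cases q <;> simp_all <;>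
        first | exact ax.ne h | exact ay.ne h | exact az.ne h
    · simp only [Sum.elim_inl, Sum.elim_inr] at h
      exfalso; fin_cases p <;> simp_all <;>
        first | exact ax.ne h.symm | exact ay.ne h.symm | exact az.ne h.symm
    · simp only [Sum.elim_inr] at h
      congr 1
      fin_cases p <;> fin_cases q <;> simp_all
  · rintro (p | p) (q | q) hadj <;> simp only [completeBipartiteGraph_adj] at hadj <;>
      try simp_all
    · fin_cases q <;> exact ⟨by assumption, by assumption⟩
    · fin_cases p <;>
        exact ⟨(by assumption : G.Adj v _).symm, by rw [Sym2.eq_swap]; assumption⟩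

lemma hasMonoK3 {V : Type} {k : ℕ} (G : SimpleGraph V) (col : Sym2 V → Fin k)
    {i : Fin k} {x y z : V}
    (axy : G.Adj x y) (axz : G.Adj x z) (ayz : G.Adj y z)
    (cxy : col s(x,y) = i) (cxz : col s(x,z) = i) (cyz : col s(y,z) = i) :
    HasMonoCopy G col (⊤ : SimpleGraph (Fin 3)) := by
  refine ⟨i, ⟨![x,y,z], ?_⟩, ?_⟩
  · intro p q h
    fin_cases p <;> fin_cases q <;> simp_all <;>
      first
        | rfl
        | exact absurd h axy.ne | exact absurd h.symm axy.ne
        | exact absurd h axz.ne | exact absurd h.symm axz.ne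
        | exact absurd h ayz.ne | exact absurd h.symm ayz.ne
  · intro p q h
    rw [top_adj] at h
    fin_cases p <;> fin_cases q <;> simp_all <;>
      first
        | exact ⟨axy, cxy⟩ | exact ⟨axy.symm, by rw [Sym2.eq_swap]; exact cxy⟩
        | exact ⟨axz, cxz⟩ | exact ⟨axz.symm, by rw [Sym2.eq_swap]; exact cxz⟩
        | exact ⟨ayz, cyz⟩ | exact ⟨ayz.symm, by rw [Sym2.eq_swap]; exact cyz⟩

lemma greedy {V : Type} [Fintype V] (G : SimpleGraph V) [DecidableRel G.Adj] (d : ℕ)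
    (hdeg : ∀ v : V, (Finset.univ.filter (fun u => G.Adj v u)).card ≤ d) :
    G.Colorable (d+1) := by
  classical
  suffices h : ∀ s : Finset V, ∃ f : V → Fin (d+1),
      ∀ u ∈ s, ∀ w ∈ s, G.Adj u w → f u ≠ f w by
    obtain ⟨f, hf⟩ := h Finset.univ
    exact ⟨SimpleGraph.Coloring.mk f
      (fun hab => hf _ (Finset.mem_univ _) _ (Finset.mem_univ _) hab)⟩
  intro s
  induction s using Finset.induction_on with
  | empty => exact ⟨fun _ => 0, by simp⟩
  | @insert a s ha ih =>
    obtain ⟨f, hf⟩ := ih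
    have hcard : ((s.filter (fun u => G.Adj a u)).image f).card < d + 1 := by
      calc ((s.filter (fun u => G.Adj a u)).image f).card
          ≤ (s.filter (fun u => G.Adj a u)).card := Finset.card_image_le
        _ ≤ (Finset.univ.filter (fun u => G.Adj a u)).card :=
            Finset.card_le_card (Finset.filter_subset_filter _ (Finset.subset_univ s))
        _ ≤ d := hdeg a
        _ < d + 1 := by omega
    obtain ⟨c, hc⟩ : ∃ c : Fin (d+1), c ∉ (s.filter (fun u => G.Adj a u)).image f := by
      by_contra hcon
      push_neg at hcon
      have hsub : (Finset.univ : Finset (Fin (d+1))) ⊆ (s.filter (fun u => G.Adj a u)).image f :=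
        fun c _ => hcon c
      have hle := Finset.card_le_card hsub
      rw [Finset.card_univ, Fintype.card_fin] at hle
      omega
    refine ⟨Function.update f a c, ?_⟩
    intro u hu w hw hadj
    by_cases hua : u = a
    · rw [hua] at hadj ⊢
      by_cases hwa : w = a
      · rw [hwa] at hadj; exact absurd hadj (G.loopless.irrefl _)
      · have hws : w ∈ s := (Finset.mem_insert.mp hw).resolve_left hwa
        rw [Function.update_self, Function.update_of_ne hwa]
        intro h
        exact hc (by rw [h]; exact Finset.mem_image_of_mem f (Finset.mem_filter.mpr ⟨hws, hadj⟩))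
    · have hus : u ∈ s := (Finset.mem_insert.mp hu).resolve_left hua
      by_cases hwa : w = a
      · rw [hwa] at hadj ⊢
        rw [Function.update_self, Function.update_of_ne hua]
        intro h
        exact hc (by rw [← h]; exact Finset.mem_image_of_mem f (Finset.mem_filter.mpr ⟨hus, hadj.symm⟩))
      · have hws : w ∈ s := (Finset.mem_insert.mp hw).resolve_left hwa
        rw [Function.update_of_ne hua, Function.update_of_ne hwa]
        exact hf u hus w hws hadj

lemma fiber_le_two {V : Type} {k : ℕ} [Fintype V] [DecidableEq V] (G : SimpleGraph V)
    [DecidableRel G.Adj] (col : Sym2 V → Fin k)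
    (hS : ¬ HasMonoCopy G col (completeBipartiteGraph (Fin 1) (Fin 3)))
    (v : V) (i : Fin k) :
    (Finset.univ.filter (fun u => G.Adj v u ∧ col s(v,u) = i)).card ≤ 2 := by
  classical
  by_contra h
  push_neg at h
  obtain ⟨x, hx, y, hy, z, hz, hxy, hxz, hyz⟩ := exists_three h
  rw [Finset.mem_filter] at hx hy hz
  exact hS (hasMonoS3 G col hxy hxz hyz hx.2.1 hy.2.1 hz.2.1 hx.2.2 hy.2.2 hz.2.2)

lemma deg_le {V : Type} {k : ℕ} [Fintype V] [DecidableEq V] (G : SimpleGraph V)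
    [DecidableRel G.Adj] (col : Sym2 V → Fin k)
    (hS : ¬ HasMonoCopy G col (completeBipartiteGraph (Fin 1) (Fin 3))) (v : V) :
    (Finset.univ.filter (fun u => G.Adj v u)).card ≤ 2*k := by
  classical
  have hb : ∀ b ∈ (Finset.univ : Finset (Fin k)),
      ((Finset.univ.filter (fun u => G.Adj v u)).filter
        (fun u => col s(v,u) = b)).card ≤ 2 := by
    intro b _
    rw [Finset.filter_filter]
    exact fiber_le_two G col hS v b
  have := Finset.card_le_mul_card_image_of_maps_to
    (f := fun u => col s(v,u)) (t := Finset.univ)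
    (fun a _ => Finset.mem_univ _) 2 hb
  simpa using this

lemma ub_c {k s : ℕ} (hk : 1 ≤ k) (hs : s ∈ cSet k F5) : s ≤ 2*k+1 := by
  obtain ⟨col, hav⟩ := hs
  by_contra hcon
  push_neg at hcon
  have hS := hav ⟨Fin 1 ⊕ Fin 3, completeBipartiteGraph (Fin 1) (Fin 3)⟩
    (by simp [F5])
  have hv : (0 : ℕ) < s := by omega
  set v : Fin s := ⟨0, hv⟩ with hvdef
  have hcard : (Finset.univ : Finset (Fin k)).card * 2 <
      (Finset.univ.erase v).card := by
    simp only [Finset.card_erase_of_mem (Finset.mem_univ v), Finset.card_univ,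
      Fintype.card_fin]
    omega
  obtain ⟨i, _, hi⟩ := Finset.exists_lt_card_fiber_of_mul_lt_card_of_maps_to
    (f := fun u => col s(v,u)) (fun a _ => Finset.mem_univ _) hcard
  obtain ⟨x, hx, y, hy, z, hz, hxy, hxz, hyz⟩ := exists_three hi
  rw [Finset.mem_filter] at hx hy hz
  have hvx : v ≠ x := (Finset.ne_of_mem_erase hx.1).symm
  have hvy : v ≠ y := (Finset.ne_of_mem_erase hy.1).symm
  have hvz : v ≠ z := (Finset.ne_of_mem_erase hz.1).symm
  exact hS (hasMonoS3 (⊤ : SimpleGraph (Fin s)) col hxy hxz hyz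
    hvx hvy hvz hx.2 hy.2 hz.2)

lemma ub_g {k s : ℕ} (hk : 1 ≤ k) (hs : s ∈ gSet k F5) : s ≤ 2*k+1 := by
  obtain ⟨V, hfin, G, col, hchi, hav⟩ := hs
  classical
  have hS := hav ⟨Fin 1 ⊕ Fin 3, completeBipartiteGraph (Fin 1) (Fin 3)⟩
    (by simp [F5])
  have hcol : G.Colorable (2*k+1) := greedy G (2*k) (deg_le G col hS)
  have hle : G.chromaticNumber ≤ (2*k+1 : ℕ) :=
    SimpleGraph.chromaticNumber_le_iff_colorable.mpr hcol
  rw [hchi] at hle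
  exact_mod_cast hle

lemma mem_c {k : ℕ} (hk : 2 ≤ k) : (2*k+1) ∈ cSet k F5 :=
  ⟨fcol k (by omega), avoidF5 hk⟩

lemma mem_g {k : ℕ} (hk : 2 ≤ k) : (2*k+1) ∈ gSet k F5 :=
  ⟨Fin (2*k+1), inferInstance, ⊤, fcol k (by omega),
    by rw [SimpleGraph.chromaticNumber_top]; simp, avoidF5 hk⟩

lemma mem_c1 : 2 ∈ cSet 1 F5 := by
  refine ⟨fun _ => 0, ?_⟩
  intro H hH
  simp only [F5, Set.mem_insert_iff, Set.mem_singleton_iff] at hH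
  rcases hH with rfl | rfl <;> rintro ⟨i, f, hf⟩
  · have := Fintype.card_le_of_embedding f
    simp at this
  · have := Fintype.card_le_of_embedding f
    simp at this

lemma ub_c1 {s : ℕ} (hs : s ∈ cSet 1 F5) : s ≤ 2 := by
  obtain ⟨col, hav⟩ := hs
  by_contra hcon
  push_neg at hcon
  have hK := hav ⟨Fin 3, (⊤ : SimpleGraph (Fin 3))⟩ (by simp [F5])
  refine hK ⟨0, (Fin.castLEEmb (by omega : 3 ≤ s)), ?_⟩
  intro a b hab
  rw [SimpleGraph.top_adj] at hab ⊢
  exact ⟨(Fin.castLEEmb _).injective.ne hab, Subsingleton.elim _ _⟩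

lemma c5_colorable : (cycleGraph 5).Colorable 3 := by
  have hvalid : ∀ a b : Fin 5, (cycleGraph 5).Adj a b →
      (![0,1,0,1,2] : Fin 5 → Fin 3) a ≠ ![0,1,0,1,2] b := by decide
  exact ⟨SimpleGraph.Coloring.mk _ (fun h => hvalid _ _ h)⟩

lemma c5_not_colorable2 : ¬ (cycleGraph 5).Colorable 2 := by
  rintro ⟨C⟩
  have h : ¬ ∃ f : Fin 5 → Fin 2, ∀ a b : Fin 5,
      (cycleGraph 5).Adj a b → f a ≠ f b := by decide
  exact h ⟨C, fun a b hab => C.valid hab⟩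

lemma c5_chrom : (cycleGraph 5).chromaticNumber = (3 : ℕ∞) := by
  have h3 : (cycleGraph 5).chromaticNumber ≤ (3 : ℕ) :=
    SimpleGraph.chromaticNumber_le_iff_colorable.mpr c5_colorable
  have h2 : ¬ (cycleGraph 5).chromaticNumber ≤ (2 : ℕ) :=
    fun h => c5_not_colorable2 (SimpleGraph.chromaticNumber_le_iff_colorable.mp h)
  have hne : (cycleGraph 5).chromaticNumber ≠ ⊤ := by
    intro h
    rw [h] at h3
    exact absurd h3 (by simp)
  obtain ⟨n, hn⟩ := WithTop.ne_top_iff_exists.mp hne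
  rw [← hn] at h3 h2 ⊢
  have h3' : n ≤ 3 := Nat.cast_le.mp h3
  have h2' : ¬ n ≤ 2 := fun h => h2 (Nat.cast_le.mpr h)
  have : n = 3 := by omega
  rw [this]; rfl

lemma c5_noK3 : ∀ a b c : Fin 5, (cycleGraph 5).Adj a b → (cycleGraph 5).Adj b c →
    (cycleGraph 5).Adj a c → False := by decide

lemma c5_noS3 : ∀ v x y z : Fin 5, (cycleGraph 5).Adj v x → (cycleGraph 5).Adj v y →
    (cycleGraph 5).Adj v z → x = y ∨ x = z ∨ y = z := by decide

lemma mem_g1 : 3 ∈ gSet 1 F5 := by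
  refine ⟨Fin 5, inferInstance, cycleGraph 5, fun _ => 0, c5_chrom, ?_⟩
  intro H hH
  simp only [F5, Set.mem_insert_iff, Set.mem_singleton_iff] at hH
  rcases hH with rfl | rfl <;> rintro ⟨i, f, hf⟩
  · exact c5_noK3 (f 0) (f 1) (f 2)
      (hf 0 1 (by simp)).1 (hf 1 2 (by simp)).1 (hf 0 2 (by simp)).1
  · have h := c5_noS3 (f (.inl 0)) (f (.inr 0)) (f (.inr 1)) (f (.inr 2))
      (hf (.inl 0) (.inr 0) (by simp)).1 (hf (.inl 0) (.inr 1) (by simp)).1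
      (hf (.inl 0) (.inr 2) (by simp)).1
    rcases h with h | h | h <;> exact absurd (f.injective h) (by decide)

end helper

/-- `c_k(F₅) = g_k(F₅) = 2k + 1` for every `k ≥ 2`, while `c₁(F₅) = 2` and
`g₁(F₅) ≥ 3`.  In particular `F₅` is `k`-nice for every `k ≥ 2` but not for `k = 1`. -/
theorem stmt1 :
    (∀ k : ℕ, 2 ≤ k →
        IsGreatest (cSet k F5) (2 * k + 1) ∧ IsGreatest (gSet k F5) (2 * k + 1)) ∧
    IsGreatest (cSet 1 F5) 2 ∧ (3 ∈ gSet 1 F5) ∧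
    ¬ (∀ v : ℕ, IsGreatest (cSet 1 F5) v ↔ IsGreatest (gSet 1 F5) v) := by
  have hc1 : IsGreatest (cSet 1 F5) 2 := ⟨mem_c1, fun s hs => ub_c1 hs⟩
  refine ⟨fun k hk => ⟨⟨mem_c hk, fun s hs => ub_c (by omega) hs⟩,
    ⟨mem_g hk, fun s hs => ub_g (by omega) hs⟩⟩, hc1, mem_g1, ?_⟩
  intro hAll
  have h := ((hAll 2).mp hc1).2 mem_g1
  omega
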